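/- arXiv:1808.07900 — 2 statements merged into one kernel-verified Lean document; each statement's English description precedes it below -/
import Mathlib

section
/- Let Q(x,y) = a·x² + b·x·y + c·y² be a positive definite integral binary quadratic form whose discriminant Δ = b² − 4·a·c is a fundamental discriminant. Then for every integer n ≥ 1: r(n,Q) ≤ u(Δ)·σ₀(n), where u(Δ) = 6 if Δ = −3, u(Δ) = 4 if Δ = −4, and u(Δ) = 2 otherwise. -/
/-- `σ₀(n)`: the number of positive divisors of `n`. -/
def sigma0 (n : ℕ) : ℕ := n.divisors.card

/-- A negative integer `Δ` is a fundamental discriminant if either `Δ ≡ 1 (mod 4)`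
and `Δ` is squarefree, or `Δ ≡ 0 (mod 4)`, `Δ/4` is squarefree and
`Δ/4 ≡ 2 or 3 (mod 4)`. -/
def IsFundamentalDiscriminant (Δ : ℤ) : Prop :=
  Δ < 0 ∧
    ((Δ % 4 = 1 ∧ Squarefree Δ) ∨
     (Δ % 4 = 0 ∧ Squarefree (Δ / 4) ∧ (Δ / 4 % 4 = 2 ∨ Δ / 4 % 4 = 3)))

/-- `u(Δ)`: the number of automorphs, `6` if `Δ = −3`, `4` if `Δ = −4`, else `2`. -/
def uAut (Δ : ℤ) : ℕ := if Δ = -3 then 6 else if Δ = -4 then 4 else 2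

open Finset

namespace Stmt7Aux

/-- Roots of `z^2 + b z + k` modulo `m`, represented as integers in `[0, m)`. -/
noncomputable def roots (b k : ℤ) (m : ℕ) : Finset ℤ :=
  (Finset.Ico (0:ℤ) (m:ℤ)).filter (fun z => (m:ℤ) ∣ z^2 + b*z + k)

noncomputable def Fz (b k : ℤ) (m : ℕ) : ℕ := (roots b k m).card

lemma mem_roots {b k : ℤ} {m : ℕ} {z : ℤ} :
    z ∈ roots b k m ↔ (0 ≤ z ∧ z < (m:ℤ)) ∧ (m:ℤ) ∣ z^2 + b*z + k := by
  simp [roots, Finset.mem_filter, Finset.mem_Ico]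

lemma emod_mem_roots {b k : ℤ} {m' m : ℕ} (hm' : 0 < m') (hdvd : m' ∣ m)
    {z : ℤ} (hz : (m:ℤ) ∣ z^2 + b*z + k) : z % (m':ℤ) ∈ roots b k m' := by
  have h0 : (0:ℤ) < (m':ℤ) := by exact_mod_cast hm'
  refine mem_roots.mpr ⟨⟨Int.emod_nonneg z h0.ne', Int.emod_lt_of_pos z h0⟩, ?_⟩
  have hdz : (m':ℤ) ∣ z^2 + b*z + k :=
    dvd_trans (Int.natCast_dvd_natCast.mpr hdvd) hz
  have hzw : (m':ℤ) ∣ z - z % (m':ℤ) := ⟨z / (m':ℤ), by rw [Int.emod_def]; ring⟩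
  have key : (z % (m':ℤ))^2 + b*(z % (m':ℤ)) + k
      = (z^2 + b*z + k) - (z - z % (m':ℤ)) * (z + z % (m':ℤ) + b) := by ring
  rw [key]
  exact dvd_sub hdz (hzw.mul_right _)

lemma Fz_one (b k : ℤ) : Fz b k 1 = 1 := by
  have : roots b k 1 = {0} := by
    ext z
    simp only [mem_roots, Finset.mem_singleton]
    constructor
    · rintro ⟨⟨h0, h1⟩, -⟩
      push_cast at h1
      omega
    · rintro rfl
      exact ⟨⟨le_refl _, by norm_num⟩, by norm_num⟩
  simp [Fz, this]

lemma Fz_le_two_aux {b k : ℤ} {m : ℕ} (hm : 0 < m)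
    (H : ∀ z₁ ∈ roots b k m, ∀ z₂ ∈ roots b k m,
      (m:ℤ) ∣ z₁ - z₂ ∨ (m:ℤ) ∣ z₁ + z₂ + b) :
    Fz b k m ≤ 2 := by
  rcases (roots b k m).eq_empty_or_nonempty with he | ⟨z₀, hz₀⟩
  · simp [Fz, he]
  have hm0 : (0:ℤ) < (m:ℤ) := by exact_mod_cast hm
  have hsub : roots b k m ⊆ {z₀, (-b - z₀) % (m:ℤ)} := by
    intro z hz
    obtain ⟨⟨hz0, hz1⟩, -⟩ := mem_roots.mp hz
    obtain ⟨⟨hw0, hw1⟩, -⟩ := mem_roots.mp hz₀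
    rcases H z hz z₀ hz₀ with h | h
    · have hzz : z - z₀ = 0 :=
        Int.eq_zero_of_abs_lt_dvd h (abs_lt.mpr ⟨by linarith, by linarith⟩)
      have : z = z₀ := by linarith
      simp [this]
    · have h1 : (m:ℤ) ∣ (-b - z₀) - z := by
        have : (-b - z₀) - z = -(z + z₀ + b) := by ring
        rw [this]
        exact dvd_neg.mpr h
      have h2 : (-b - z₀) % (m:ℤ) = z % (m:ℤ) := by
        rw [Int.emod_eq_emod_iff_emod_sub_eq_zero]
        exact Int.emod_eq_zero_of_dvd h1
      have h3 : z % (m:ℤ) = z := Int.emod_eq_of_lt hz0 hz1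
      simp [Finset.mem_insert, h2, h3]
  calc (roots b k m).card ≤ ({z₀, (-b - z₀) % (m:ℤ)} : Finset ℤ).card :=
        Finset.card_le_card hsub
    _ ≤ 2 := (Finset.card_insert_le _ _).trans (by simp)


lemma root_pair {b k : ℤ} {m : ℕ} {z₁ z₂ : ℤ}
    (h₁ : (m:ℤ) ∣ z₁^2 + b*z₁ + k) (h₂ : (m:ℤ) ∣ z₂^2 + b*z₂ + k) :
    (m:ℤ) ∣ (z₁ - z₂) * (z₁ + z₂ + b) := by
  have : (z₁ - z₂) * (z₁ + z₂ + b) = (z₁^2 + b*z₁ + k) - (z₂^2 + b*z₂ + k) := by ring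
  rw [this]
  exact dvd_sub h₁ h₂

lemma Fz_prime_le_two {b k : ℤ} {p : ℕ} (hp : p.Prime) : Fz b k p ≤ 2 := by
  refine Fz_le_two_aux hp.pos ?_
  intro z₁ hz₁ z₂ hz₂
  obtain ⟨-, h₁⟩ := mem_roots.mp hz₁
  obtain ⟨-, h₂⟩ := mem_roots.mp hz₂
  exact ((Nat.prime_iff_prime_int.mp hp).dvd_mul.mp (root_pair h₁ h₂)).imp id id

lemma Fz_pow_le_two {b k : ℤ} {p : ℕ} (hp : p.Prime)
    (hnd : ¬ (p:ℤ) ∣ b^2 - 4*k) {i : ℕ} (hi : 1 ≤ i) : Fz b k (p^i) ≤ 2 := by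
  refine Fz_le_two_aux (pow_pos hp.pos i) ?_
  intro z₁ hz₁ z₂ hz₂
  obtain ⟨-, h₁⟩ := mem_roots.mp hz₁
  obtain ⟨-, h₂⟩ := mem_roots.mp hz₂
  have hpi : ((p^i : ℕ):ℤ) = (p:ℤ)^i := by push_cast; ring
  have hmul : ((p:ℤ))^i ∣ (z₁ - z₂) * (z₁ + z₂ + b) := by
    rw [← hpi]; exact root_pair h₁ h₂
  have hp' : Prime (p:ℤ) := Nat.prime_iff_prime_int.mp hp
  have hnot : ¬ ((p:ℤ) ∣ z₁ - z₂ ∧ (p:ℤ) ∣ z₁ + z₂ + b) := by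
    rintro ⟨hX, hY⟩
    have hsum : (p:ℤ) ∣ 2*z₁ + b := by
      have : 2*z₁ + b = (z₁ - z₂) + (z₁ + z₂ + b) := by ring
      rw [this]; exact dvd_add hX hY
    have hf : (p:ℤ) ∣ z₁^2 + b*z₁ + k := by
      refine dvd_trans ?_ h₁
      exact_mod_cast Nat.cast_dvd_cast (dvd_pow_self p (by omega : i ≠ 0))
    have : (p:ℤ) ∣ b^2 - 4*k := by
      have hsq : (p:ℤ) ∣ (2*z₁ + b)^2 := dvd_pow hsum (by norm_num)
      have : b^2 - 4*k = (2*z₁ + b)^2 - 4*(z₁^2 + b*z₁ + k) := by ring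
      rw [this]
      exact dvd_sub hsq (Dvd.dvd.mul_left hf 4)
    exact hnd this
  by_cases hX : (p:ℤ) ∣ z₁ - z₂
  · left
    have hY : ¬ (p:ℤ) ∣ z₁ + z₂ + b := fun h => hnot ⟨hX, h⟩
    have hco : IsCoprime ((p:ℤ)^i) (z₁ + z₂ + b) :=
      (hp'.coprime_iff_not_dvd.mpr hY).pow_left
    rw [hpi]
    exact hco.dvd_of_dvd_mul_right hmul
  · right
    have hco : IsCoprime ((p:ℤ)^i) (z₁ - z₂) :=
      (hp'.coprime_iff_not_dvd.mpr hX).pow_left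
    rw [hpi]
    exact hco.dvd_of_dvd_mul_left hmul

lemma Fz_eq_zero_of {b k : ℤ} {m' m : ℕ} (hm' : 0 < m') (hdvd : m' ∣ m)
    (h : Fz b k m' = 0) : Fz b k m = 0 := by
  rw [Fz, Finset.card_eq_zero] at h ⊢
  rw [Finset.eq_empty_iff_forall_notMem]
  intro z hz
  obtain ⟨-, hroot⟩ := mem_roots.mp hz
  have := emod_mem_roots hm' hdvd hroot
  rw [h] at this
  exact absurd this (Finset.notMem_empty _)

lemma Fz_sq_zero {b k : ℤ} {p : ℕ} (hp : p.Prime) (hdvd : (p:ℤ) ∣ b^2 - 4*k)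
    (hnsq : ¬ (p:ℤ)^2 ∣ b^2 - 4*k) : Fz b k (p^2) = 0 := by
  rw [Fz, Finset.card_eq_zero, Finset.eq_empty_iff_forall_notMem]
  intro z hz
  obtain ⟨-, hroot⟩ := mem_roots.mp hz
  have hp' : Prime (p:ℤ) := Nat.prime_iff_prime_int.mp hp
  have hpi : ((p^2 : ℕ):ℤ) = (p:ℤ)^2 := by push_cast; ring
  rw [hpi] at hroot
  have hf : (p:ℤ) ∣ z^2 + b*z + k := dvd_trans (dvd_pow_self _ two_ne_zero) hroot
  have hw : (p:ℤ) ∣ 2*z + b := by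
    apply hp'.dvd_of_dvd_pow (n := 2)
    have : (2*z + b)^2 = 4*(z^2 + b*z + k) + (b^2 - 4*k) := by ring
    rw [this]
    exact dvd_add (hf.mul_left 4) hdvd
  apply hnsq
  have hw2 : (p:ℤ)^2 ∣ (2*z + b)^2 := pow_dvd_pow_of_dvd hw 2
  have : b^2 - 4*k = (2*z + b)^2 - 4*(z^2 + b*z + k) := by ring
  rw [this]
  exact dvd_sub hw2 (hroot.mul_left 4)

lemma Fz_four_zero {k b b₁ D : ℤ} (hb : b = 2*b₁) (hD : b₁^2 - k = D)
    (hDmod : D % 4 = 2 ∨ D % 4 = 3) : Fz b k 4 = 0 := by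
  rw [Fz, Finset.card_eq_zero, Finset.eq_empty_iff_forall_notMem]
  intro z hz
  obtain ⟨-, hroot⟩ := mem_roots.mp hz
  have h4 : ((4:ℕ):ℤ) = 4 := by norm_num
  rw [h4] at hroot
  have hw : (4:ℤ) ∣ (z + b₁)^2 - D := by
    have : (z + b₁)^2 - D = z^2 + b*z + k := by rw [← hD, hb]; ring
    rwa [this]
  rcases Int.even_or_odd (z + b₁) with ⟨l, hl⟩ | ⟨l, hl⟩
  · obtain ⟨e, he⟩ := hw
    have hkey : 4*(l*l) - D = 4*e := by
      rw [← he, hl]; ring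
    have : D % 4 = 0 := by omega
    omega
  · obtain ⟨e, he⟩ := hw
    have hkey : 4*(l*l) + 4*l + 1 - D = 4*e := by
      rw [← he, hl]; ring
    have : D % 4 = 1 := by omega
    omega

lemma Fz_mul_le {b k : ℤ} {m₁ m₂ : ℕ} (hco : Nat.Coprime m₁ m₂) :
    Fz b k (m₁ * m₂) ≤ Fz b k m₁ * Fz b k m₂ := by
  rcases Nat.eq_zero_or_pos m₁ with rfl | h₁
  · simp [Fz, roots]
  rcases Nat.eq_zero_or_pos m₂ with rfl | h₂
  · simp [Fz, roots]
  have key : (roots b k (m₁*m₂)).card ≤ ((roots b k m₁) ×ˢ (roots b k m₂)).card := by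
    apply Finset.card_le_card_of_injOn (fun z => (z % (m₁:ℤ), z % (m₂:ℤ)))
    · intro z hz
      obtain ⟨-, hroot⟩ := mem_roots.mp hz
      rw [Finset.mem_coe, Finset.mem_product]
      exact ⟨emod_mem_roots h₁ (Dvd.intro m₂ rfl) hroot,
             emod_mem_roots h₂ (Dvd.intro_left m₁ rfl) hroot⟩
    · intro z hz w hw heq
      simp only [Finset.mem_coe, Prod.mk.injEq] at heq
      obtain ⟨⟨hz0, hz1⟩, -⟩ := mem_roots.mp hz
      obtain ⟨⟨hw0, hw1⟩, -⟩ := mem_roots.mp hw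
      have d₁ : (m₁:ℤ) ∣ z - w := by
        rw [Int.dvd_iff_emod_eq_zero, ← Int.emod_eq_emod_iff_emod_sub_eq_zero]
        exact heq.1
      have d₂ : (m₂:ℤ) ∣ z - w := by
        rw [Int.dvd_iff_emod_eq_zero, ← Int.emod_eq_emod_iff_emod_sub_eq_zero]
        exact heq.2
      have dco : IsCoprime (m₁:ℤ) (m₂:ℤ) := Nat.isCoprime_iff_coprime.mpr hco
      have dall : ((m₁*m₂ : ℕ):ℤ) ∣ z - w := by
        push_cast
        exact dco.mul_dvd d₁ d₂
      have hcast : ((m₁*m₂:ℕ):ℤ) = (m₁:ℤ)*(m₂:ℤ) := by push_cast; ring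
      have : z - w = 0 := by
        apply Int.eq_zero_of_abs_lt_dvd dall
        rw [hcast] at hz1 hw1 ⊢
        rw [abs_lt]
        constructor <;> nlinarith [hz0, hw0]
      linear_combination this
  simpa [Fz, Finset.card_product] using key


noncomputable def colSum (b k : ℤ) (p K : ℕ) : ℕ :=
  ∑ j ∈ Finset.range (K/2 + 1), Fz b k (p^(K - 2*j))

lemma colSum_le {b k : ℤ} {p : ℕ} (hp : p.Prime)
    (hcase : (¬ (p:ℤ) ∣ b^2 - 4*k) ∨ Fz b k (p^2) = 0) :
    ∀ K, colSum b k p K ≤ K + 1 := by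
  rcases hcase with hnd | hzero
  · intro K
    induction K using Nat.strong_induction_on with
    | _ K ih =>
      match K, ih with
      | 0, _ => simp [colSum, Fz_one]
      | 1, _ =>
        have : colSum b k p 1 = Fz b k (p^1) := by simp [colSum]
        rw [this]
        exact le_trans (by simpa using Fz_pow_le_two hp hnd (le_refl 1)) (by norm_num)
      | (K+2), ih =>
        have hsplit : colSum b k p (K+2) = Fz b k (p^(K+2)) + colSum b k p K := by
          rw [colSum, colSum, show (K+2)/2 + 1 = (K/2 + 1) + 1 by omega,
            Finset.sum_range_succ']
          have e0 : Fz b k (p ^ (K + 2 - 2 * 0)) = Fz b k (p^(K+2)) := by norm_num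
          have es : ∀ j ∈ Finset.range (K/2+1),
              Fz b k (p^(K+2-2*(j+1))) = Fz b k (p^(K-2*j)) := by
            intro j hj
            congr 2
            omega
          rw [Finset.sum_congr rfl es, e0, add_comm]
        rw [hsplit]
        have h1 : Fz b k (p^(K+2)) ≤ 2 := Fz_pow_le_two hp hnd (by omega)
        have h2 : colSum b k p K ≤ K + 1 := ih K (by omega)
        omega
  · intro K
    rcases Nat.eq_zero_or_pos K with rfl | hK
    · simp [colSum, Fz_one]
    have hterm : ∀ j ∈ Finset.range (K/2 + 1),
        Fz b k (p^(K - 2*j)) ≤ if j = K/2 then 2 else 0 := by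
      intro j hj
      rw [Finset.mem_range] at hj
      by_cases hjK : j = K/2
      · simp only [hjK, if_pos rfl]
        have : K - 2*(K/2) = 0 ∨ K - 2*(K/2) = 1 := by omega
        rcases this with h | h
        · rw [h]; simp [Fz_one]
        · rw [h]; simpa using Fz_prime_le_two (b := b) (k := k) hp
      · simp only [if_neg hjK]
        have h2j : 2 ≤ K - 2*j := by omega
        have : Fz b k (p^(K-2*j)) = 0 := by
          apply Fz_eq_zero_of (pow_pos hp.pos 2) (pow_dvd_pow p h2j) hzero
        omega
    calc colSum b k p K ≤ ∑ j ∈ Finset.range (K/2+1), if j = K/2 then 2 else 0 :=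
          Finset.sum_le_sum hterm
      _ = 2 := by
          rw [Finset.sum_ite_eq' (Finset.range (K/2+1)) (K/2) (fun _ => 2)]
          simp [Finset.mem_range]
      _ ≤ K + 1 := by omega

theorem Tsum_le (b k : ℤ)
    (hcol : ∀ p : ℕ, p.Prime → ∀ K, colSum b k p K ≤ K + 1) :
    ∀ n : ℕ, 0 < n →
      ∑ g ∈ n.divisors.filter (fun g => g^2 ∣ n), Fz b k (n / g^2)
        ≤ n.divisors.card := by
  intro n
  induction n using Nat.strong_induction_on with
  | _ n ih =>
    intro hn
    rcases eq_or_lt_of_le (Nat.one_le_iff_ne_zero.mpr hn.ne') with h1 | h1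
    · -- n = 1
      rw [← h1]
      have he : Finset.filter (fun g => g^2 ∣ 1) (Nat.divisors 1) = {1} := by decide
      rw [he, Finset.sum_singleton]
      norm_num [Fz_one]
    -- n ≥ 2
    have hn0 : n ≠ 0 := hn.ne'
    set p := n.minFac with hpdef
    have hp : p.Prime := Nat.minFac_prime (by omega)
    set K := n.factorization p with hKdef
    set n' := ordCompl[p] n with hn'def
    have hsplit : p^K * n' = n := Nat.ordProj_mul_ordCompl_eq_self n p
    have hK1 : 1 ≤ K := hp.factorization_pos_of_dvd hn0 (Nat.minFac_dvd n)
    have hn'0 : n' ≠ 0 := (Nat.ordCompl_pos p hn0).ne'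
    have hcop : Nat.Coprime p n' := Nat.coprime_ordCompl hp hn0
    have hpK2 : 2 ≤ p^K :=
      le_trans hp.two_le (le_trans (le_of_eq (pow_one p).symm)
        (Nat.pow_le_pow_right hp.pos hK1))
    have hn'lt : n' < n := by
      have h2 : 2*n' ≤ p^K * n' := Nat.mul_le_mul_right n' hpK2
      omega
    set s := n.divisors.filter (fun g => g^2 ∣ n) with hsdef
    set s' := n'.divisors.filter (fun g => g^2 ∣ n') with hs'def
    -- facts about elements of s
    have hsfact : ∀ g ∈ s, g ≠ 0 ∧ 2*(g.factorization p) ≤ K ∧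
        (ordCompl[p] g)^2 ∣ n' ∧ p^(g.factorization p) * ordCompl[p] g = g := by
      intro g hg
      rw [hsdef, Finset.mem_filter, Nat.mem_divisors] at hg
      obtain ⟨⟨hgdvd, -⟩, hg2⟩ := hg
      have hg0 : g ≠ 0 := by
        rintro rfl
        exact hn0 (Nat.eq_zero_of_zero_dvd hgdvd)
      have hjK : 2*(g.factorization p) ≤ K := by
        have hle := (Nat.factorization_le_iff_dvd (pow_ne_zero 2 hg0) hn0).mpr hg2
        have := hle p
        rwa [Nat.factorization_pow, Finsupp.smul_apply, smul_eq_mul] at this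
      have hpg' : ¬ p ∣ ordCompl[p] g := Nat.not_dvd_ordCompl hp hg0
      have hg'2 : (ordCompl[p] g)^2 ∣ n' := by
        have hd : (ordCompl[p] g)^2 ∣ p^K * n' := by
          rw [hsplit]
          exact dvd_trans (pow_dvd_pow_of_dvd (Nat.ordCompl_dvd g p) 2) hg2
        have hco2 : Nat.Coprime ((ordCompl[p] g)^2) (p^K) :=
          Nat.Coprime.pow _ _ ((hp.coprime_iff_not_dvd.mpr hpg').symm)
        exact (Nat.Coprime.dvd_of_dvd_mul_left hco2 hd)
      exact ⟨hg0, hjK, hg'2, Nat.ordProj_mul_ordCompl_eq_self g p⟩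
    -- termwise bound
    have hterm : ∀ g ∈ s, Fz b k (n / g^2) ≤
        Fz b k (p^(K - 2*(g.factorization p))) * Fz b k (n' / (ordCompl[p] g)^2) := by
      intro g hg
      obtain ⟨hg0, hjK, hg'2, hgsplit⟩ := hsfact g hg
      set j := g.factorization p
      set g' := ordCompl[p] g
      have hval : n / g^2 = p^(K - 2*j) * (n' / g'^2) := by
        have h1 : g^2 = p^(2*j) * g'^2 := by
          rw [← hgsplit]; ring
        have h2 : p^(2*j) ∣ p^K := pow_dvd_pow p hjK
        have h3 : (p^K / p^(2*j)) * (n' / g'^2) = (p^K * n') / (p^(2*j) * g'^2) :=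
          Nat.div_mul_div_comm h2 hg'2
        rw [h1, ← hsplit, ← h3, Nat.pow_div hjK hp.pos]
      rw [hval]
      apply Fz_mul_le
      have hco3 : Nat.Coprime p (n' / g'^2) :=
        Nat.Coprime.coprime_dvd_right ⟨g'^2, (Nat.div_mul_cancel hg'2).symm⟩ hcop
      exact Nat.Coprime.pow_left _ hco3
    -- reindex
    have hreindex : ∑ g ∈ s,
        Fz b k (p^(K - 2*(g.factorization p))) * Fz b k (n' / (ordCompl[p] g)^2)
        = ∑ x ∈ (Finset.range (K/2+1)) ×ˢ s',
            Fz b k (p^(K - 2*x.1)) * Fz b k (n' / x.2^2) := by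
      apply Finset.sum_nbij' (i := fun g => (g.factorization p, ordCompl[p] g))
        (j := fun x => p^x.1 * x.2)
      · intro g hg
        obtain ⟨hg0, hjK, hg'2, hgsplit⟩ := hsfact g hg
        rw [Finset.mem_product, Finset.mem_range, hs'def, Finset.mem_filter,
          Nat.mem_divisors]
        exact ⟨by omega, ⟨dvd_trans (dvd_pow_self _ two_ne_zero) hg'2, hn'0⟩, hg'2⟩
      · intro x hx
        rw [Finset.mem_product, Finset.mem_range] at hx
        obtain ⟨hx1, hx2⟩ := hx
        rw [hs'def, Finset.mem_filter, Nat.mem_divisors] at hx2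
        obtain ⟨⟨hdvd', -⟩, h2dvd'⟩ := hx2
        rw [hsdef, Finset.mem_filter, Nat.mem_divisors]
        have hsq : (p^x.1 * x.2)^2 ∣ n := by
          rw [← hsplit, mul_pow, ← pow_mul]
          exact mul_dvd_mul (pow_dvd_pow p (by omega)) h2dvd'
        exact ⟨⟨dvd_trans (dvd_pow_self _ two_ne_zero) hsq, hn0⟩, hsq⟩
      · intro g hg
        obtain ⟨-, -, -, hgsplit⟩ := hsfact g hg
        exact hgsplit
      · intro x hx
        rw [Finset.mem_product, Finset.mem_range] at hx
        obtain ⟨hx1, hx2⟩ := hx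
        rw [hs'def, Finset.mem_filter, Nat.mem_divisors] at hx2
        obtain ⟨⟨hdvd', -⟩, -⟩ := hx2
        have hx20 : x.2 ≠ 0 := by
          rintro h0
          rw [h0] at hdvd'
          exact hn'0 (Nat.eq_zero_of_zero_dvd hdvd')
        have hpx2 : ¬ p ∣ x.2 := fun h => (Nat.Prime.coprime_iff_not_dvd hp).mp
          (Nat.Coprime.coprime_dvd_right hdvd' hcop) h
        have hfac : (p^x.1 * x.2).factorization p = x.1 := by
          rw [Nat.factorization_mul (pow_ne_zero _ hp.pos.ne') hx20,
            hp.factorization_pow, Finsupp.add_apply, Finsupp.single_eq_same,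
            Nat.factorization_eq_zero_of_not_dvd hpx2]
          omega
        have hcompl : ordCompl[p] (p^x.1 * x.2) = x.2 := by
          rw [hfac, Nat.mul_div_cancel_left _ (pow_pos hp.pos x.1)]
        rw [Prod.ext_iff]
        exact ⟨hfac, hcompl⟩
      · intro g hg
        rfl
    -- put it together
    calc ∑ g ∈ s, Fz b k (n / g^2)
        ≤ ∑ g ∈ s, Fz b k (p^(K - 2*(g.factorization p))) *
            Fz b k (n' / (ordCompl[p] g)^2) := Finset.sum_le_sum hterm
      _ = ∑ x ∈ (Finset.range (K/2+1)) ×ˢ s',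
            Fz b k (p^(K - 2*x.1)) * Fz b k (n' / x.2^2) := hreindex
      _ = (∑ j ∈ Finset.range (K/2+1), Fz b k (p^(K - 2*j))) *
            (∑ g' ∈ s', Fz b k (n' / g'^2)) := by
          rw [Finset.sum_mul_sum, Finset.sum_product]
      _ ≤ (K+1) * n'.divisors.card := by
          apply Nat.mul_le_mul
          · exact hcol p hp K
          · exact ih n' hn'lt (Nat.pos_of_ne_zero hn'0)
      _ = n.divisors.card := by
          rw [← hsplit, Nat.Coprime.card_divisors_mul (Nat.Coprime.pow_left K hcop)]
          congr 1
          rw [Nat.divisors_prime_pow hp, Finset.card_map, Finset.card_range]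


/-- The "units" of the quadratic order: solutions of `P² + bPQ + acQ² = 1`
are contained in an explicit finite set of cardinality at most `uAut Δ`. -/
lemma units_subset (a b c : ℤ) (hΔ3 : b^2 - 4*a*c ≤ -3) :
    ∃ L : Finset (ℤ × ℤ), (∀ P Q : ℤ, P^2 + b*P*Q + a*c*Q^2 = 1 → (P, Q) ∈ L) ∧
      L.card ≤ (if b^2 - 4*a*c = -3 then 6 else if b^2 - 4*a*c = -4 then 4 else 2) := by
  by_cases h3 : b^2 - 4*a*c = -3
  · -- b is odd
    have hbodd : ∃ l : ℤ, b = 2*l + 1 := by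
      rcases Int.even_or_odd b with ⟨l, hl⟩ | ⟨l, hl⟩
      · exfalso
        have hkey : 4*(l*l - a*c) = -3 := by rw [← h3, hl]; ring
        omega
      · exact ⟨l, hl⟩
    obtain ⟨l, hl⟩ := hbodd
    refine ⟨{(1,0),(-1,0),(-l,1),(-l-1,1),(l+1,-1),(l,-1)}, ?_, ?_⟩
    · intro P Q h
      have h4 : (2*P + b*Q)^2 + 3*Q^2 = 4 := by linear_combination 4*h + Q^2*h3
      have hQ1 : -1 ≤ Q := by nlinarith [sq_nonneg (2*P + b*Q)]
      have hQ2 : Q ≤ 1 := by nlinarith [sq_nonneg (2*P + b*Q)]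
      have hQ : Q = -1 ∨ Q = 0 ∨ Q = 1 := by omega
      simp only [Finset.mem_insert, Finset.mem_singleton, Prod.mk.injEq]
      rcases hQ with rfl | rfl | rfl
      · have hW : (2*P + b*(-1))^2 = 1 := by linarith
        have : (2*P + b*(-1) - 1)*(2*P + b*(-1) + 1) = 0 := by linear_combination hW
        rcases mul_eq_zero.mp this with h' | h'
        · -- 2P - b = 1, b = 2l+1 : P = l + 1
          have : P = l + 1 := by omega
          simp [this]
        · have : P = l := by omega
          simp [this]
      · have : (P-1)*(P+1) = 0 := by linear_combination h
        rcases mul_eq_zero.mp this with h' | h'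
        · have : P = 1 := by omega
          simp [this]
        · have : P = -1 := by omega
          simp [this]
      · have hW : (2*P + b*1)^2 = 1 := by linarith
        have : (2*P + b*1 - 1)*(2*P + b*1 + 1) = 0 := by linear_combination hW
        rcases mul_eq_zero.mp this with h' | h'
        · have : P = -l := by omega
          simp [this]
        · have : P = -l-1 := by omega
          simp [this]
    · rw [if_pos h3]
      refine le_trans (Finset.card_insert_le _ _) ?_
      refine Nat.succ_le_succ ?_
      refine le_trans (Finset.card_insert_le _ _) ?_
      refine Nat.succ_le_succ ?_
      refine le_trans (Finset.card_insert_le _ _) ?_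
      refine Nat.succ_le_succ ?_
      refine le_trans (Finset.card_insert_le _ _) ?_
      refine Nat.succ_le_succ ?_
      refine le_trans (Finset.card_insert_le _ _) ?_
      simp
  by_cases h4' : b^2 - 4*a*c = -4
  · -- b is even
    have hbeven : ∃ l : ℤ, b = 2*l := by
      rcases Int.even_or_odd b with ⟨l, hl⟩ | ⟨l, hl⟩
      · exact ⟨l, by omega⟩
      · exfalso
        have hkey : 4*(l*l + l - a*c) + 1 = -4 := by rw [← h4', hl]; ring
        omega
    obtain ⟨l, hl⟩ := hbeven
    refine ⟨{(1,0),(-1,0),(-l,1),(l,-1)}, ?_, ?_⟩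
    · intro P Q h
      have h4 : (2*P + b*Q)^2 + 4*Q^2 = 4 := by linear_combination 4*h + Q^2*h4'
      have hQ1 : -1 ≤ Q := by nlinarith [sq_nonneg (2*P + b*Q)]
      have hQ2 : Q ≤ 1 := by nlinarith [sq_nonneg (2*P + b*Q)]
      have hQ : Q = -1 ∨ Q = 0 ∨ Q = 1 := by omega
      simp only [Finset.mem_insert, Finset.mem_singleton, Prod.mk.injEq]
      rcases hQ with rfl | rfl | rfl
      · have hW : (2*P + b*(-1))^2 = 0 := by linarith
        have h' : 2*P + b*(-1) = 0 := by
          have := sq_eq_zero_iff.mp hW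
          linarith
        have : P = l := by omega
        tauto
      · have : (P-1)*(P+1) = 0 := by linear_combination h
        rcases mul_eq_zero.mp this with h' | h'
        · have : P = 1 := by omega
          simp [this]
        · have : P = -1 := by omega
          simp [this]
      · have hW : (2*P + b*1)^2 = 0 := by linarith
        have h' : 2*P + b*1 = 0 := by
          have := sq_eq_zero_iff.mp hW
          linarith
        have : P = -l := by omega
        tauto
    · rw [if_neg h3, if_pos h4']
      refine le_trans (Finset.card_insert_le _ _) ?_
      refine Nat.succ_le_succ ?_
      refine le_trans (Finset.card_insert_le _ _) ?_
      refine Nat.succ_le_succ ?_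
      refine le_trans (Finset.card_insert_le _ _) ?_
      simp
  · -- |Δ| ≥ 5
    have h5 : b^2 - 4*a*c ≤ -5 := by omega
    refine ⟨{(1,0),(-1,0)}, ?_, ?_⟩
    · intro P Q h
      have h4 : (2*P + b*Q)^2 + (-(b^2 - 4*a*c))*Q^2 = 4 := by linear_combination 4*h
      have hQ : Q = 0 := by
        by_contra hQ0
        have h1 : 1 ≤ Q^2 := by
          rcases lt_or_gt_of_ne hQ0 with h' | h' <;> nlinarith
        nlinarith [sq_nonneg (2*P + b*Q)]
      subst hQ
      have : (P-1)*(P+1) = 0 := by linear_combination h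
      simp only [Finset.mem_insert, Finset.mem_singleton, Prod.mk.injEq]
      rcases mul_eq_zero.mp this with h' | h'
      · have : P = 1 := by omega
        tauto
      · have : P = -1 := by omega
        tauto
    · rw [if_neg h3, if_neg h4']
      exact le_trans (Finset.card_insert_le _ _) (by simp)

/-- Primitivity of the form: from fundamentality, `gcd(a,b,c)=1` in Bézout form. -/
lemma bezout_abc (a b c : ℤ) (ha : a ≠ 0)
    (hmod : (b^2 - 4*a*c) % 4 = 1 ∧ Squarefree (b^2 - 4*a*c) ∨
      (b^2 - 4*a*c) % 4 = 0 ∧ Squarefree ((b^2 - 4*a*c) / 4) ∧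
        ((b^2 - 4*a*c) / 4 % 4 = 2 ∨ (b^2 - 4*a*c) / 4 % 4 = 3)) :
    ∃ r s t : ℤ, r*a + s*b + t*c = 1 := by
  set G1 : ℕ := Int.gcd a b with hG1def
  set G : ℕ := Int.gcd (G1 : ℤ) c with hGdef
  suffices hG : G = 1 by
    have e1 : ((G:ℕ):ℤ) = (G1:ℤ) * Int.gcdA (G1:ℤ) c + c * Int.gcdB (G1:ℤ) c :=
      Int.gcd_eq_gcd_ab _ _
    have e2 : ((G1:ℕ):ℤ) = a * Int.gcdA a b + b * Int.gcdB a b :=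
      Int.gcd_eq_gcd_ab a b
    rw [hG] at e1
    refine ⟨Int.gcdA a b * Int.gcdA (G1:ℤ) c, Int.gcdB a b * Int.gcdA (G1:ℤ) c,
      Int.gcdB (G1:ℤ) c, ?_⟩
    push_cast at e1
    linear_combination -e1 - Int.gcdA (G1:ℤ) c * e2
  by_contra hG1
  have hG0 : G ≠ 0 := by
    intro h0
    rw [hGdef] at h0
    have := Int.gcd_eq_zero_iff.mp h0
    have hG10 : (G1:ℤ) = 0 := this.1
    rw [hG1def] at hG10
    have : Int.gcd a b = 0 := by exact_mod_cast hG10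
    exact ha (Int.gcd_eq_zero_iff.mp this).1
  set p := G.minFac with hpdef
  have hp : p.Prime := Nat.minFac_prime hG1
  have hp' : Prime (p:ℤ) := Nat.prime_iff_prime_int.mp hp
  have hpG : (p:ℤ) ∣ (G:ℤ) := Int.natCast_dvd_natCast.mpr (Nat.minFac_dvd G)
  have hpG1 : (p:ℤ) ∣ (G1:ℤ) := hpG.trans (Int.gcd_dvd_left _ _)
  have hpc : (p:ℤ) ∣ c := hpG.trans (Int.gcd_dvd_right _ _)
  have hpa : (p:ℤ) ∣ a := hpG1.trans (Int.gcd_dvd_left _ _)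
  have hpb : (p:ℤ) ∣ b := hpG1.trans (Int.gcd_dvd_right _ _)
  obtain ⟨a₁, ha₁⟩ := hpa
  obtain ⟨b₁, hb₁⟩ := hpb
  obtain ⟨c₁, hc₁⟩ := hpc
  have hp2 : (p:ℤ)^2 ∣ b^2 - 4*a*c :=
    ⟨b₁^2 - 4*a₁*c₁, by rw [ha₁, hb₁, hc₁]; ring⟩
  rcases hmod with ⟨-, hsf⟩ | ⟨hmod4, hsfD, hDmod⟩
  · exact hp'.not_unit (hsf (p:ℤ) (by rwa [← pow_two]))
  · set Δ := b^2 - 4*a*c with hΔdef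
    have hD4 : Δ = 4 * (Δ / 4) := by omega
    by_cases hp2' : p = 2
    · -- p = 2 : contradiction with D ≡ 2,3 mod 4
      have hp2'' : (p:ℤ) = 2 := by rw [hp2']; norm_num
      have hval : Δ = 4 * (b₁^2 - 4*a₁*c₁) := by
        rw [hΔdef, ha₁, hb₁, hc₁, hp2'']; ring
      have hDval : Δ / 4 = b₁^2 - 4*a₁*c₁ := by omega
      rcases Int.even_or_odd b₁ with ⟨m, hm⟩ | ⟨m, hm⟩
      · have : b₁^2 - 4*a₁*c₁ = 4*(m*m - a₁*c₁) := by rw [hm]; ring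
        omega
      · have : b₁^2 - 4*a₁*c₁ = 4*(m*m + m - a₁*c₁) + 1 := by rw [hm]; ring
        omega
    · -- p odd
      have hpne2 : ¬ (p:ℤ) ∣ 2 := by
        intro h
        have h2 : (p:ℕ) ∣ 2 := by exact_mod_cast h
        have hle := Nat.le_of_dvd (by norm_num) h2
        have h2le := hp.two_le
        exact hp2' (by omega)
      have hco : IsCoprime ((p:ℤ)^2) (4:ℤ) := by
        have h1 : IsCoprime (p:ℤ) 2 := hp'.coprime_iff_not_dvd.mpr hpne2
        have := (h1.pow : IsCoprime ((p:ℤ)^2) ((2:ℤ)^2))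
        norm_num at this
        exact this
      have hpD : (p:ℤ)^2 ∣ Δ / 4 := by
        apply hco.dvd_of_dvd_mul_left
        rw [← hD4]
        exact hp2
      exact hp'.not_unit (hsfD (p:ℤ) (by rwa [← pow_two]))


/-- The invariant `z` attached to a primitive representation. -/
noncomputable def zfun (a b c x y : ℤ) (m : ℕ) : ℤ :=
  (-(a*x*(Int.gcdB x y)) - b*y*(Int.gcdB x y) + c*y*(Int.gcdA x y)) % (m:ℤ)

lemma zfun_props {a b c x y : ℤ} {m : ℕ} (hm : 0 < m)
    (hcop : Int.gcd x y = 1)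
    (hQ : a*x^2 + b*x*y + c*y^2 = (m:ℤ)) :
    zfun a b c x y m ∈ roots b (a*c) m ∧
    (m:ℤ) ∣ x*(zfun a b c x y m) - c*y ∧
    (m:ℤ) ∣ y*(zfun a b c x y m) + a*x + b*y := by
  have hm0 : (0:ℤ) < (m:ℤ) := by exact_mod_cast hm
  rw [zfun]
  set A := Int.gcdA x y with hA
  set B := Int.gcdB x y with hB
  have hAB : x * A + y * B = 1 := by
    have h := Int.gcd_eq_gcd_ab x y
    rw [hcop] at h
    push_cast at h
    linarith
  set z0 : ℤ := -(a*x*B) - b*y*B + c*y*A with hz0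
  have h1 : (m:ℤ) ∣ x*z0 - c*y := ⟨-B, by linear_combination (-B)*hQ + (c*y)*hAB⟩
  have h2 : (m:ℤ) ∣ y*z0 + a*x + b*y := ⟨A, by linear_combination A*hQ - (a*x+b*y)*hAB⟩
  have hz0diff : (m:ℤ) ∣ z0 - z0 % (m:ℤ) := ⟨z0 / (m:ℤ), by rw [Int.emod_def]; ring⟩
  set w := z0 % (m:ℤ) with hw
  have h1' : (m:ℤ) ∣ x*w - c*y := by
    have e : x*w - c*y = (x*z0 - c*y) - x*(z0 - w) := by ring
    rw [e]
    exact dvd_sub h1 (hz0diff.mul_left x)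
  have h2' : (m:ℤ) ∣ y*w + a*x + b*y := by
    have e : y*w + a*x + b*y = (y*z0 + a*x + b*y) - y*(z0 - w) := by ring
    rw [e]
    exact dvd_sub h2 (hz0diff.mul_left y)
  have hx2 : (m:ℤ) ∣ x^2*(w^2 + b*w + a*c) := by
    have e : x^2*(w^2 + b*w + a*c)
        = (x*w - c*y)*(x*w + c*y + b*x) + c*(a*x^2 + b*x*y + c*y^2) := by ring
    rw [e, hQ]
    exact dvd_add (h1'.mul_right _) (dvd_mul_left _ _)
  have hy2 : (m:ℤ) ∣ y^2*(w^2 + b*w + a*c) := by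
    have e : y^2*(w^2 + b*w + a*c)
        = (y*w + a*x + b*y)*(y*w - a*x) + a*(a*x^2 + b*x*y + c*y^2) := by ring
    rw [e, hQ]
    exact dvd_add (h2'.mul_right _) (dvd_mul_left _ _)
  have hroot : (m:ℤ) ∣ w^2 + b*w + a*c := by
    have hcoI : IsCoprime x y := Int.isCoprime_iff_gcd_eq_one.mpr hcop
    obtain ⟨u, v, huv⟩ := hcoI.pow (m := 2) (n := 2)
    have e : w^2 + b*w + a*c
        = u*(x^2*(w^2 + b*w + a*c)) + v*(y^2*(w^2 + b*w + a*c)) := by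
      linear_combination (w^2 + b*w + a*c)*huv.symm
    rw [e]
    exact dvd_add (hx2.mul_left u) (hy2.mul_left v)
  exact ⟨mem_roots.mpr ⟨⟨Int.emod_nonneg _ hm0.ne', Int.emod_lt_of_pos _ hm0⟩, hroot⟩,
    h1', h2'⟩

/-- Core fiber bound: representations of `m` sharing the invariant `t`
inject into the unit set `L`. -/
lemma fiber_le (a b c : ℤ) (habc : ∃ r s t : ℤ, r*a + s*b + t*c = 1)
    (m : ℕ) (hm : 0 < m) (t : ℤ)
    (A : Finset (ℤ × ℤ))
    (hQ : ∀ q ∈ A, a*q.1^2 + b*q.1*q.2 + c*q.2^2 = (m:ℤ))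
    (h1 : ∀ q ∈ A, (m:ℤ) ∣ q.1*t - c*q.2)
    (h2 : ∀ q ∈ A, (m:ℤ) ∣ q.2*t + a*q.1 + b*q.2)
    (L : Finset (ℤ×ℤ)) (hL : ∀ P Q : ℤ, P^2 + b*P*Q + a*c*Q^2 = 1 → (P,Q) ∈ L) :
    A.card ≤ L.card := by
  rcases A.eq_empty_or_nonempty with rfl | ⟨q₁, hq₁⟩
  · simp
  have hm0 : ((m:ℕ):ℤ) ≠ 0 := by exact_mod_cast hm.ne'
  set x₁ := q₁.1 with hx₁
  set y₁ := q₁.2 with hy₁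
  -- for each q in A we get m ∣ u' and m ∣ v'
  have hukey : ∀ q ∈ A, (m:ℤ) ∣ a*x₁*q.1 + b*q.1*y₁ + c*y₁*q.2 := by
    intro q hq
    have e : a*x₁*q.1 + b*q.1*y₁ + c*y₁*q.2
        = q.1*(y₁*t + a*x₁ + b*y₁) - y₁*(q.1*t - c*q.2) := by ring
    rw [e]
    exact dvd_sub ((h2 q₁ hq₁).mul_left q.1) ((h1 q hq).mul_left y₁)
  have hvkey : ∀ q ∈ A, (m:ℤ) ∣ x₁*q.2 - q.1*y₁ := by
    intro q hq
    have hva : (m:ℤ) ∣ a*(x₁*q.2 - q.1*y₁) := by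
      have e : a*(x₁*q.2 - q.1*y₁)
          = q.2*(y₁*t + a*x₁ + b*y₁) - y₁*(q.2*t + a*q.1 + b*q.2) := by ring
      rw [e]
      exact dvd_sub ((h2 q₁ hq₁).mul_left q.2) ((h2 q hq).mul_left y₁)
    have hvc : (m:ℤ) ∣ c*(x₁*q.2 - q.1*y₁) := by
      have e : c*(x₁*q.2 - q.1*y₁)
          = q.1*(x₁*t - c*y₁) - x₁*(q.1*t - c*q.2) := by ring
      rw [e]
      exact dvd_sub ((h1 q₁ hq₁).mul_left q.1) ((h1 q hq).mul_left x₁)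
    have hvt : (m:ℤ) ∣ t*(x₁*q.2 - q.1*y₁) := by
      have e : t*(x₁*q.2 - q.1*y₁)
          = q.2*(x₁*t - c*y₁) - y₁*(q.1*t - c*q.2) := by ring
      rw [e]
      exact dvd_sub ((h1 q₁ hq₁).mul_left q.2) ((h1 q hq).mul_left y₁)
    have hvb : (m:ℤ) ∣ b*(x₁*q.2 - q.1*y₁) := by
      have hbt : (m:ℤ) ∣ (b + t)*(x₁*q.2 - q.1*y₁) := by
        have e : (b + t)*(x₁*q.2 - q.1*y₁)
            = x₁*(q.2*t + a*q.1 + b*q.2) - q.1*(y₁*t + a*x₁ + b*y₁) := by ring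
        rw [e]
        exact dvd_sub ((h2 q hq).mul_left x₁) ((h2 q₁ hq₁).mul_left q.1)
      have e : b*(x₁*q.2 - q.1*y₁)
          = (b + t)*(x₁*q.2 - q.1*y₁) - t*(x₁*q.2 - q.1*y₁) := by ring
      rw [e]
      exact dvd_sub hbt hvt
    obtain ⟨r, s, t', hrst⟩ := habc
    have e : x₁*q.2 - q.1*y₁
        = r*(a*(x₁*q.2 - q.1*y₁)) + s*(b*(x₁*q.2 - q.1*y₁))
          + t'*(c*(x₁*q.2 - q.1*y₁)) := by
      linear_combination (x₁*q.2 - q.1*y₁)*hrst.symm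
    rw [e]
    exact dvd_add (dvd_add (hva.mul_left r) (hvb.mul_left s)) (hvc.mul_left t')
  apply Finset.card_le_card_of_injOn
    (fun q => ((a*x₁*q.1 + b*q.1*y₁ + c*y₁*q.2)/(m:ℤ), (x₁*q.2 - q.1*y₁)/(m:ℤ)))
  · intro q hq
    obtain ⟨P, hP⟩ := hukey q hq
    obtain ⟨V, hV⟩ := hvkey q hq
    have hPd : (a*x₁*q.1 + b*q.1*y₁ + c*y₁*q.2)/(m:ℤ) = P := by
      rw [hP, Int.mul_ediv_cancel_left _ hm0]
    have hVd : (x₁*q.2 - q.1*y₁)/(m:ℤ) = V := by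
      rw [hV, Int.mul_ediv_cancel_left _ hm0]
    simp only [Finset.mem_coe]
    rw [hPd, hVd]
    apply hL
    -- norm equation via the Brahmagupta identity
    have hid : (a*x₁*q.1 + b*q.1*y₁ + c*y₁*q.2)^2
        + b*(a*x₁*q.1 + b*q.1*y₁ + c*y₁*q.2)*(x₁*q.2 - q.1*y₁)
        + a*c*(x₁*q.2 - q.1*y₁)^2
        = (a*x₁^2 + b*x₁*y₁ + c*y₁^2)*(a*q.1^2 + b*q.1*q.2 + c*q.2^2) := by ring
    rw [hP, hV, hQ q₁ hq₁, hQ q hq] at hid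
    have hm2 : ((m:ℤ))^2 ≠ 0 := pow_ne_zero 2 hm0
    apply mul_left_cancel₀ hm2
    linear_combination hid
  · intro q hq q' hq' heq
    simp only [Prod.mk.injEq] at heq
    obtain ⟨P, hP⟩ := hukey q hq
    obtain ⟨V, hV⟩ := hvkey q hq
    obtain ⟨P', hP'⟩ := hukey q' hq'
    obtain ⟨V', hV'⟩ := hvkey q' hq'
    have hPd : (a*x₁*q.1 + b*q.1*y₁ + c*y₁*q.2)/(m:ℤ) = P := by
      rw [hP, Int.mul_ediv_cancel_left _ hm0]
    have hVd : (x₁*q.2 - q.1*y₁)/(m:ℤ) = V := by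
      rw [hV, Int.mul_ediv_cancel_left _ hm0]
    have hPd' : (a*x₁*q'.1 + b*q'.1*y₁ + c*y₁*q'.2)/(m:ℤ) = P' := by
      rw [hP', Int.mul_ediv_cancel_left _ hm0]
    have hVd' : (x₁*q'.2 - q'.1*y₁)/(m:ℤ) = V' := by
      rw [hV', Int.mul_ediv_cancel_left _ hm0]
    have hPP : P = P' := by rw [← hPd, ← hPd', heq.1]
    have hVV : V = V' := by rw [← hVd, ← hVd', heq.2]
    -- recovery of coordinates
    have hrec1 : ∀ qq ∈ A, ∀ PP VV : ℤ,
        a*x₁*qq.1 + b*qq.1*y₁ + c*y₁*qq.2 = (m:ℤ)*PP →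
        x₁*qq.2 - qq.1*y₁ = (m:ℤ)*VV →
        qq.1 = PP*x₁ - c*VV*y₁ ∧ qq.2 = PP*y₁ + VV*(a*x₁ + b*y₁) := by
      intro qq hqq PP VV hu hv
      have hQ1 := hQ q₁ hq₁
      have e1 : x₁*(a*x₁*qq.1 + b*qq.1*y₁ + c*y₁*qq.2) - c*y₁*(x₁*qq.2 - qq.1*y₁)
          = qq.1*(a*x₁^2 + b*x₁*y₁ + c*y₁^2) := by ring
      rw [hu, hv, hQ1] at e1
      have e2 : y₁*(a*x₁*qq.1 + b*qq.1*y₁ + c*y₁*qq.2)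
            + (a*x₁ + b*y₁)*(x₁*qq.2 - qq.1*y₁)
          = qq.2*(a*x₁^2 + b*x₁*y₁ + c*y₁^2) := by ring
      rw [hu, hv, hQ1] at e2
      constructor
      · apply mul_left_cancel₀ hm0
        linear_combination -e1
      · apply mul_left_cancel₀ hm0
        linear_combination -e2
    obtain ⟨hq1eq, hq2eq⟩ := hrec1 q hq P V hP hV
    obtain ⟨hq1eq', hq2eq'⟩ := hrec1 q' hq' P' V' hP' hV'
    have : q.1 = q'.1 := by rw [hq1eq, hq1eq', hPP, hVV]
    have h22 : q.2 = q'.2 := by rw [hq2eq, hq2eq', hPP, hVV]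
    exact Prod.ext this h22

end Stmt7Aux


/-- For a positive definite integral binary quadratic form `Q` of fundamental
discriminant `Δ` and every `n ≥ 1`: `r(n,Q) ≤ u(Δ)·σ₀(n)`. -/
theorem stmt_7 (a b c : ℤ) (ha : 0 < a) (hΔneg : b ^ 2 - 4 * a * c < 0)
    (hfund : IsFundamentalDiscriminant (b ^ 2 - 4 * a * c))
    (n : ℕ) (hn : 1 ≤ n) :
    {p : ℤ × ℤ | a * p.1 ^ 2 + b * p.1 * p.2 + c * p.2 ^ 2 = (n : ℤ)}.ncard ≤
      uAut (b ^ 2 - 4 * a * c) * sigma0 n := by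
  classical
  obtain ⟨hneg, hcases⟩ := hfund
  set Δ : ℤ := b ^ 2 - 4 * a * c with hΔdef
  have hΔ3 : Δ ≤ -3 := by
    have hm4 : Δ % 4 = 1 ∨ Δ % 4 = 0 := by
      rcases hcases with ⟨h, -⟩ | ⟨h, -, -⟩
      · exact Or.inl h
      · exact Or.inr h
    omega
  have habc : ∃ r s t : ℤ, r*a + s*b + t*c = 1 := by
    apply Stmt7Aux.bezout_abc a b c ha.ne'
    convert hcases using 3 <;> ring_nf
  obtain ⟨L, hLmem, hLcard⟩ := Stmt7Aux.units_subset a b c hΔ3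
  have hLcard' : L.card ≤ uAut Δ := by
    rw [uAut]
    convert hLcard using 2 <;> rw [hΔdef]
  have hdisc : b^2 - 4*(a*c) = Δ := by rw [hΔdef]; ring
  -- the vanishing of Fz at p² for ramified primes
  have hsq2 : ∀ p : ℕ, p.Prime → (p:ℤ) ∣ Δ → Stmt7Aux.Fz b (a*c) (p^2) = 0 := by
    intro p hp hpd
    rcases hcases with ⟨hm1, hsf⟩ | ⟨hm0, hsfD, hDmod⟩
    · apply Stmt7Aux.Fz_sq_zero hp (by rw [hdisc]; exact hpd)
      rw [hdisc]
      intro h2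
      exact (Nat.prime_iff_prime_int.mp hp).not_unit (hsf _ (by rwa [← pow_two]))
    · by_cases hp2 : p = 2
      · subst hp2
        have hbeven : ∃ l, b = 2*l := by
          rcases Int.even_or_odd b with ⟨l, hl⟩ | ⟨l, hl⟩
          · exact ⟨l, by omega⟩
          · exfalso
            have hkey : Δ = 4*(l*l + l - a*c) + 1 := by rw [hΔdef, hl]; ring
            omega
        obtain ⟨l, hl⟩ := hbeven
        have h4D : Δ = 4*(l^2 - a*c) := by rw [hΔdef, hl]; ring
        have hDval : l^2 - a*c = Δ/4 := by omega
        have h22 : ((2:ℕ)^2 : ℕ) = 4 := by norm_num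
        rw [h22]
        exact Stmt7Aux.Fz_four_zero hl hDval hDmod
      · apply Stmt7Aux.Fz_sq_zero hp (by rw [hdisc]; exact hpd)
        rw [hdisc]
        intro hsq
        have hp' : Prime (p:ℤ) := Nat.prime_iff_prime_int.mp hp
        have hpne2 : ¬ (p:ℤ) ∣ 2 := by
          intro h
          have h2 : (p:ℕ) ∣ 2 := by exact_mod_cast h
          have hle := Nat.le_of_dvd (by norm_num) h2
          have h2le := hp.two_le
          exact hp2 (by omega)
        have hco : IsCoprime ((p:ℤ)^2) (4:ℤ) := by
          have h1 : IsCoprime (p:ℤ) 2 := hp'.coprime_iff_not_dvd.mpr hpne2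
          have h2 := (h1.pow : IsCoprime ((p:ℤ)^2) ((2:ℤ)^2))
          norm_num at h2
          exact h2
        have h4 : Δ = 4 * (Δ/4) := by omega
        have hpD : (p:ℤ)^2 ∣ Δ/4 := hco.dvd_of_dvd_mul_left (by rw [← h4]; exact hsq)
        exact hp'.not_unit (hsfD _ (by rwa [← pow_two]))
  have hcol : ∀ p : ℕ, p.Prime → ∀ K, Stmt7Aux.colSum b (a*c) p K ≤ K + 1 := by
    intro p hp
    apply Stmt7Aux.colSum_le hp
    by_cases hpd : (p:ℤ) ∣ Δ
    · exact Or.inr (hsq2 p hp hpd)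
    · exact Or.inl (by rw [hdisc]; exact hpd)
  have hn0 : n ≠ 0 := by omega
  have hnpos : 0 < n := hn
  -- dispatch the infinite case
  rcases Set.finite_or_infinite
      {p : ℤ × ℤ | a * p.1 ^ 2 + b * p.1 * p.2 + c * p.2 ^ 2 = (n : ℤ)} with hfin | hinf
  swap
  · rw [hinf.ncard]
    exact Nat.zero_le _
  rw [Set.ncard_eq_toFinset_card _ hfin]
  set SF := hfin.toFinset with hSFdef
  have hmemSF : ∀ q : ℤ × ℤ, q ∈ SF → a*q.1^2 + b*q.1*q.2 + c*q.2^2 = (n:ℤ) := by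
    intro q hq
    rw [hSFdef, Set.Finite.mem_toFinset] at hq
    exact hq
  set gs := n.divisors.filter (fun g => g^2 ∣ n) with hgs
  -- per point facts
  have hpt : ∀ q : ℤ × ℤ, q ∈ SF →
      (Int.gcd q.1 q.2) ≠ 0 ∧ ((Int.gcd q.1 q.2)^2 ∣ n) ∧
      Int.gcd (q.1 / (Int.gcd q.1 q.2 : ℤ)) (q.2 / (Int.gcd q.1 q.2 : ℤ)) = 1 ∧
      a*(q.1 / (Int.gcd q.1 q.2 : ℤ))^2
        + b*(q.1 / (Int.gcd q.1 q.2 : ℤ))*(q.2 / (Int.gcd q.1 q.2 : ℤ))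
        + c*(q.2 / (Int.gcd q.1 q.2 : ℤ))^2
        = ((n / (Int.gcd q.1 q.2)^2 : ℕ) : ℤ) := by
    intro q hq
    have hQq := hmemSF q hq
    have hg0 : (Int.gcd q.1 q.2) ≠ 0 := by
      intro h0
      obtain ⟨h1, h2⟩ := Int.gcd_eq_zero_iff.mp h0
      rw [h1, h2] at hQq
      simp only [ne_eq, OfNat.ofNat_ne_zero, not_false_eq_true, zero_pow, mul_zero,
        zero_mul, add_zero, zero_add, mul_zero] at hQq
      have : n = 0 := by exact_mod_cast hQq.symm
      omega
    have hgx : ((Int.gcd q.1 q.2 : ℕ) : ℤ) ∣ q.1 := Int.gcd_dvd_left _ _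
    have hgy : ((Int.gcd q.1 q.2 : ℕ) : ℤ) ∣ q.2 := Int.gcd_dvd_right _ _
    have hx : q.1 = ((Int.gcd q.1 q.2 : ℕ) : ℤ) * (q.1 / (Int.gcd q.1 q.2 : ℤ)) :=
      (Int.mul_ediv_cancel' hgx).symm
    have hy : q.2 = ((Int.gcd q.1 q.2 : ℕ) : ℤ) * (q.2 / (Int.gcd q.1 q.2 : ℤ)) :=
      (Int.mul_ediv_cancel' hgy).symm
    have hcop : Int.gcd (q.1 / (Int.gcd q.1 q.2 : ℤ)) (q.2 / (Int.gcd q.1 q.2 : ℤ)) = 1 :=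
      Int.gcd_div_gcd_div_gcd (Nat.pos_of_ne_zero hg0)
    have hQ0 : (n:ℤ) = ((Int.gcd q.1 q.2 : ℕ) : ℤ)^2 *
        (a*(q.1 / (Int.gcd q.1 q.2 : ℤ))^2
          + b*(q.1 / (Int.gcd q.1 q.2 : ℤ))*(q.2 / (Int.gcd q.1 q.2 : ℤ))
          + c*(q.2 / (Int.gcd q.1 q.2 : ℤ))^2) := by
      linear_combination (-1)*hQq
        + (a*(q.1 + ((Int.gcd q.1 q.2 : ℕ) : ℤ)*(q.1 / (Int.gcd q.1 q.2 : ℤ))) + b*q.2)*hx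
        + (b*((Int.gcd q.1 q.2 : ℕ) : ℤ)*(q.1 / (Int.gcd q.1 q.2 : ℤ))
            + c*(q.2 + ((Int.gcd q.1 q.2 : ℕ) : ℤ)*(q.2 / (Int.gcd q.1 q.2 : ℤ))))*hy
    have hdvd : (Int.gcd q.1 q.2)^2 ∣ n := by
      have h2 : (((Int.gcd q.1 q.2)^2 : ℕ) : ℤ) ∣ (n:ℤ) := by
        push_cast
        exact ⟨_, hQ0⟩
      exact_mod_cast h2
    refine ⟨hg0, hdvd, hcop, ?_⟩
    have hcancel : (n / (Int.gcd q.1 q.2)^2) * (Int.gcd q.1 q.2)^2 = n :=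
      Nat.div_mul_cancel hdvd
    have hg2 : ((Int.gcd q.1 q.2 : ℕ) : ℤ)^2 ≠ 0 :=
      pow_ne_zero _ (Int.natCast_ne_zero.mpr hg0)
    apply mul_left_cancel₀ hg2
    rw [← hQ0]
    have hc2 := congrArg (fun t : ℕ => (t : ℤ)) hcancel
    simp only [Nat.cast_mul, Nat.cast_pow] at hc2
    linear_combination -hc2
  have hmapsto : ∀ q ∈ SF, Int.gcd q.1 q.2 ∈ gs := by
    intro q hq
    obtain ⟨hg0, hdvd, -, -⟩ := hpt q hq
    rw [hgs, Finset.mem_filter, Nat.mem_divisors]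
    exact ⟨⟨dvd_trans (dvd_pow_self _ two_ne_zero) hdvd, hn0⟩, hdvd⟩
  have hcard : SF.card ≤ ∑ g ∈ gs, uAut Δ * Stmt7Aux.Fz b (a*c) (n / g^2) := by
    rw [Finset.card_eq_sum_card_fiberwise hmapsto]
    apply Finset.sum_le_sum
    intro g hg
    have hgmem := Finset.mem_filter.mp hg
    have hg2 : g^2 ∣ n := hgmem.2
    have hgpos : 0 < g := Nat.pos_of_mem_divisors hgmem.1
    set m := n / g^2 with hmdef
    have hmpos : 0 < m := Nat.div_pos (Nat.le_of_dvd hnpos hg2) (pow_pos hgpos 2)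
    set fib := SF.filter (fun q => Int.gcd q.1 q.2 = g) with hfib
    set D : ℤ × ℤ → ℤ × ℤ := fun q => (q.1/(g:ℤ), q.2/(g:ℤ)) with hD
    have hinj : Set.InjOn D fib := by
      intro q hq q' hq' heq
      obtain ⟨hqSF, hqg⟩ := Finset.mem_filter.mp hq
      obtain ⟨hq'SF, hq'g⟩ := Finset.mem_filter.mp hq'
      have hx : q.1 = (g:ℤ) * (q.1/(g:ℤ)) := by
        rw [← hqg]
        exact (Int.mul_ediv_cancel' (Int.gcd_dvd_left _ _)).symm
      have hy : q.2 = (g:ℤ) * (q.2/(g:ℤ)) := by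
        rw [← hqg]
        exact (Int.mul_ediv_cancel' (Int.gcd_dvd_right _ _)).symm
      have hx' : q'.1 = (g:ℤ) * (q'.1/(g:ℤ)) := by
        rw [← hq'g]
        exact (Int.mul_ediv_cancel' (Int.gcd_dvd_left _ _)).symm
      have hy' : q'.2 = (g:ℤ) * (q'.2/(g:ℤ)) := by
        rw [← hq'g]
        exact (Int.mul_ediv_cancel' (Int.gcd_dvd_right _ _)).symm
      have h1 := congrArg Prod.fst heq
      have h2 := congrArg Prod.snd heq
      simp only [hD] at h1 h2
      apply Prod.ext
      · rw [hx, hx', h1]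
      · rw [hy, hy', h2]
    have hAfact : ∀ r ∈ fib.image D,
        (a*r.1^2 + b*r.1*r.2 + c*r.2^2 = ((m:ℕ):ℤ)) ∧ Int.gcd r.1 r.2 = 1 := by
      intro r hr
      obtain ⟨q, hqfib, rfl⟩ := Finset.mem_image.mp hr
      obtain ⟨hqSF, hqg⟩ := Finset.mem_filter.mp hqfib
      obtain ⟨-, -, hcop, hQ0⟩ := hpt q hqSF
      rw [hqg] at hcop hQ0
      exact ⟨hQ0, hcop⟩
    set ζ : ℤ × ℤ → ℤ := fun r => Stmt7Aux.zfun a b c r.1 r.2 m with hζ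
    have himsub : (fib.image D).image ζ ⊆ Stmt7Aux.roots b (a*c) m := by
      intro t ht
      obtain ⟨r, hr, rfl⟩ := Finset.mem_image.mp ht
      obtain ⟨hQr, hcopr⟩ := hAfact r hr
      exact (Stmt7Aux.zfun_props hmpos hcopr hQr).1
    have hfibers : ∀ t ∈ (fib.image D).image ζ,
        ((fib.image D).filter (fun r => ζ r = t)).card ≤ uAut Δ := by
      intro t ht
      refine le_trans (Stmt7Aux.fiber_le a b c habc m hmpos t
        ((fib.image D).filter (fun r => ζ r = t)) ?_ ?_ ?_ L hLmem) hLcard'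
      · intro r hr
        exact (hAfact r (Finset.mem_filter.mp hr).1).1
      · intro r hr
        obtain ⟨hrA, hrt⟩ := Finset.mem_filter.mp hr
        obtain ⟨hQr, hcopr⟩ := hAfact r hrA
        have := (Stmt7Aux.zfun_props hmpos hcopr hQr).2.1
        rwa [show Stmt7Aux.zfun a b c r.1 r.2 m = t from hrt] at this
      · intro r hr
        obtain ⟨hrA, hrt⟩ := Finset.mem_filter.mp hr
        obtain ⟨hQr, hcopr⟩ := hAfact r hrA
        have := (Stmt7Aux.zfun_props hmpos hcopr hQr).2.2
        rwa [show Stmt7Aux.zfun a b c r.1 r.2 m = t from hrt] at this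
    calc fib.card = (fib.image D).card := (Finset.card_image_of_injOn hinj).symm
      _ ≤ uAut Δ * ((fib.image D).image ζ).card :=
          Finset.card_le_mul_card_image (f := ζ) (fib.image D) (uAut Δ) hfibers
      _ ≤ uAut Δ * Stmt7Aux.Fz b (a*c) m :=
          Nat.mul_le_mul_left _ (Finset.card_le_card himsub)
  calc SF.card ≤ ∑ g ∈ gs, uAut Δ * Stmt7Aux.Fz b (a*c) (n / g^2) := hcard
    _ = uAut Δ * ∑ g ∈ gs, Stmt7Aux.Fz b (a*c) (n / g^2) := by rw [Finset.mul_sum]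
    _ ≤ uAut Δ * sigma0 n := by
        apply Nat.mul_le_mul_left
        exact Stmt7Aux.Tsum_le b (a*c) hcol n hnpos
end

section
/- Let Q be a positive definite integral ternary quadratic form with Hessian determinant q. Then there exists a ℤ-basis (u₁,u₂,u₃) of ℤ³ such that the restricted integral binary form R(x,y) := Q(x·u₁ + y·u₂) has discriminant Δ_R satisfying 0 < −Δ_R ≤ (2·q)^{2/3}. (This follows from Hermite–Rankin: γ_{2,3} = γ₃ = 2^{1/3}, so ℤ³ with Q has a rank-2 primitive sublattice of covolume at most γ₃·covol(Q)^{2/3}.) -/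
open MeasureTheory Matrix Submodule
open scoped ENNReal NNReal

open scoped ENNReal NNReal

open scoped MatrixOrder in
lemma mink (M : Matrix (Fin 3) (Fin 3) ℝ) (hM : M.PosDef) (qd R : ℝ)
    (hqd : 0 < qd) (hdet : M.det = qd ^ 2) (hR : 0 < R)
    (hvol : 8 * qd < 4 / 3 * Real.pi * R ^ 3) :
    ∃ w : Fin 3 → ℤ, w ≠ 0 ∧
      (fun i => (w i : ℝ)) ⬝ᵥ M *ᵥ (fun i => (w i : ℝ)) ≤ R ^ 2 := by
  classical
  set B := CFC.sqrt M with hBdef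
  have hBB : B * B = M := CFC.sqrt_mul_sqrt_self M hM.posSemidef.nonneg
  have hBherm : B.IsHermitian := (CFC.sqrt_nonneg M).posSemidef.1
  have hBt : Bᵀ = B := by
    ext i j
    have := congrFun (congrFun hBherm i) j
    simpa using this
  have hdetB : |B.det| = qd := by
    have h2 : B.det * B.det = qd ^ 2 := by
      rw [← Matrix.det_mul, hBB, hdet]
    have h3 : Real.sqrt (B.det ^ 2) = Real.sqrt (qd ^ 2) := by rw [sq, h2, sq]
    rwa [Real.sqrt_sq_eq_abs, Real.sqrt_sq hqd.le] at h3
  have hdetB' : LinearMap.det (Matrix.toLin' B) = B.det := LinearMap.det_toLin' B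
  have hBdet_ne : LinearMap.det (Matrix.toLin' B) ≠ 0 := by
    rw [hdetB']
    intro h
    rw [h] at hdetB
    simp at hdetB
    exact hqd.ne' hdetB.symm
  set e := (MeasurableEquiv.toLp 2 (Fin 3 → ℝ)).symm with he
  set T : Set (Fin 3 → ℝ) := e.symm ⁻¹' (Metric.closedBall 0 R) with hT
  set s : Set (Fin 3 → ℝ) := (Matrix.toLin' B) ⁻¹' T with hs
  -- convexity
  have hTconv : Convex ℝ T := by
    have : T = ((WithLp.linearEquiv 2 ℝ (Fin 3 → ℝ)).symm :
        (Fin 3 → ℝ) →ₗ[ℝ] EuclideanSpace ℝ (Fin 3)) ⁻¹' (Metric.closedBall 0 R) := rfl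
    rw [this]
    exact (convex_closedBall _ _).linear_preimage _
  have hconv : Convex ℝ s := hTconv.linear_preimage _
  -- symmetry
  have hsymm : ∀ x ∈ s, -x ∈ s := by
    intro x hx
    simp only [hs, Set.mem_preimage, map_neg, hT] at hx ⊢
    have : e.symm (-(Matrix.toLin' B x)) = -(e.symm (Matrix.toLin' B x)) := rfl
    rw [this]
    simpa [mem_closedBall_zero_iff] using hx
  -- volume of s
  have hvolT : volume T = ENNReal.ofReal R ^ 3 *
      ENNReal.ofReal (Real.sqrt Real.pi ^ 3 / Real.Gamma (3 / 2 + 1)) := by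
    rw [hT, ((EuclideanSpace.volume_preserving_symm_measurableEquiv_toLp (Fin 3)).symm e).measure_preimage
      measurableSet_closedBall.nullMeasurableSet, EuclideanSpace.volume_closedBall]
    norm_num
  have hvols : volume s = ENNReal.ofReal (qd⁻¹) * volume T := by
    rw [hs, Measure.addHaar_preimage_linearMap volume hBdet_ne]
    congr 2
    rw [hdetB', abs_inv, hdetB]
  -- the lattice
  set L := (span ℤ (Set.range (Pi.basisFun ℝ (Fin 3)))).toAddSubgroup with hL
  haveI : Countable L :=
    inferInstanceAs (Countable (span ℤ (Set.range (Pi.basisFun ℝ (Fin 3)))))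
  have fund : IsAddFundamentalDomain L (ZSpan.fundamentalDomain (Pi.basisFun ℝ (Fin 3))) volume :=
    ZSpan.isAddFundamentalDomain' (Pi.basisFun ℝ (Fin 3)) volume
  have hvolF : volume (ZSpan.fundamentalDomain (Pi.basisFun ℝ (Fin 3))) = 1 := by
    rw [ZSpan.volume_fundamentalDomain]
    have h : (Matrix.of ⇑(Pi.basisFun ℝ (Fin 3))) = (1 : Matrix (Fin 3) (Fin 3) ℝ) := by
      ext i j
      simp [Matrix.one_apply, Pi.single_apply, eq_comm]
    rw [h]
    simp
  have hGamma : Real.sqrt Real.pi ^ 3 / Real.Gamma ((3:ℝ) / 2 + 1) = 4 / 3 * Real.pi := by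
    have h2 : Real.Gamma ((3:ℝ) / 2) = 1 / 2 * Real.sqrt Real.pi := by
      have h : ((3:ℝ)/2) = 1/2 + 1 := by norm_num
      rw [h, Real.Gamma_add_one (by norm_num), Real.Gamma_one_half_eq]
    have h1 : Real.Gamma ((3:ℝ) / 2 + 1) = 3 / 2 * Real.Gamma (3 / 2) := by
      rw [Real.Gamma_add_one (by norm_num)]
    have h3 : Real.sqrt Real.pi ^ 2 = Real.pi := Real.sq_sqrt Real.pi_pos.le
    have h4 : Real.sqrt Real.pi ≠ 0 := by positivity
    rw [h1, h2]
    field_simp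
    nlinarith [h3, Real.sqrt_nonneg Real.pi]
  have hlt : volume (ZSpan.fundamentalDomain (Pi.basisFun ℝ (Fin 3))) *
      2 ^ Module.finrank ℝ (Fin 3 → ℝ) < volume s := by
    rw [hvolF, one_mul, hvols, hvolT, Module.finrank_fin_fun, hGamma]
    have hnum : ENNReal.ofReal (qd⁻¹) * (ENNReal.ofReal R ^ 3 *
        ENNReal.ofReal (4 / 3 * Real.pi)) =
        ENNReal.ofReal (qd⁻¹ * (R ^ 3 * (4 / 3 * Real.pi))) := by
      rw [← ENNReal.ofReal_pow hR.le, ← ENNReal.ofReal_mul (by positivity),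
        ← ENNReal.ofReal_mul (by positivity)]
    rw [hnum]
    have h8 : ((2:ℝ≥0∞) ^ 3 : ℝ≥0∞) = ENNReal.ofReal 8 := by
      rw [show (8:ℝ) = 2^3 by norm_num, ENNReal.ofReal_pow (by norm_num)]
      norm_num
    rw [h8, ENNReal.ofReal_lt_ofReal_iff (by positivity)]
    rw [lt_inv_mul_iff₀ hqd]
    nlinarith [hvol]
  obtain ⟨x, hx0, hxs⟩ :=
    exists_ne_zero_mem_lattice_of_measure_mul_two_pow_lt_measure fund hsymm hconv hlt
  -- extract integer coordinates
  have hmem : ∀ i, ∃ z : ℤ, (z : ℝ) = (x : Fin 3 → ℝ) i := by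
    intro i
    have := ((Pi.basisFun ℝ (Fin 3)).mem_span_iff_repr_mem ℤ (x : Fin 3 → ℝ)).mp
      (SetLike.coe_mem x) i
    simpa using this
  choose w hw using hmem
  refine ⟨w, ?_, ?_⟩
  · intro hcon
    apply hx0
    have : (x : Fin 3 → ℝ) = 0 := by
      funext i
      rw [← hw i, congrFun hcon i]
      simp
    exact Subtype.ext this
  · have hxw : (fun i => (w i : ℝ)) = (x : Fin 3 → ℝ) := funext hw
    rw [hxw]
    -- unfold membership
    have hxs' : e.symm (Matrix.toLin' B (x : Fin 3 → ℝ)) ∈ Metric.closedBall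
        (0 : EuclideanSpace ℝ (Fin 3)) R := hxs
    rw [mem_closedBall_zero_iff] at hxs'
    set y : Fin 3 → ℝ := B *ᵥ (x : Fin 3 → ℝ) with hy
    have hyy : ‖e.symm (Matrix.toLin' B (x : Fin 3 → ℝ))‖ =
        Real.sqrt (∑ i, ‖y i‖ ^ 2) := by
      rw [EuclideanSpace.norm_eq]
      rfl
    rw [hyy] at hxs'
    have hsum : (∑ i, ‖y i‖ ^ 2) = y ⬝ᵥ y := by
      simp [dotProduct, Real.norm_eq_abs, sq_abs, sq]
    have h1 : y ⬝ᵥ y ≤ R ^ 2 := by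
      rw [← hsum]
      have := Real.sq_sqrt (by positivity : (0:ℝ) ≤ ∑ i, ‖y i‖ ^ 2)
      nlinarith [Real.sqrt_nonneg (∑ i, ‖y i‖ ^ 2)]
    calc (x : Fin 3 → ℝ) ⬝ᵥ M *ᵥ (x : Fin 3 → ℝ)
        = (M *ᵥ (x : Fin 3 → ℝ)) ⬝ᵥ (x : Fin 3 → ℝ) := dotProduct_comm _ _
      _ = (B *ᵥ (B *ᵥ (x : Fin 3 → ℝ))) ⬝ᵥ (x : Fin 3 → ℝ) := by
          rw [Matrix.mulVec_mulVec, hBB]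
      _ = ((B *ᵥ (x : Fin 3 → ℝ)) ᵥ* B) ⬝ᵥ (x : Fin 3 → ℝ) := by
          rw [← Matrix.vecMul_transpose, hBt]
      _ = y ⬝ᵥ y := by rw [← Matrix.dotProduct_mulVec]
      _ ≤ R ^ 2 := h1

open Matrix

/-- the quadratic form of the adjugate of the Hessian, explicitly -/
def qaP (a11 a12 a13 a22 a23 a33 c0 c1 c2 : ℤ) : ℤ :=
  (4*a22*a33 - a23^2)*c0^2 + (4*a11*a33 - a13^2)*c1^2 + (4*a11*a22 - a12^2)*c2^2
    + 2*(a13*a23 - 2*a12*a33)*c0*c1 + 2*(a12*a23 - 2*a13*a22)*c0*c2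
    + 2*(a12*a13 - 2*a11*a23)*c1*c2

lemma adj_cross (a11 a12 a13 a22 a23 a33 u0 u1 u2 v0 v1 v2 : ℤ) :
    4 * (a11*u0^2 + a22*u1^2 + a33*u2^2 + a12*u0*u1 + a13*u0*u2 + a23*u1*u2)
      * (a11*v0^2 + a22*v1^2 + a33*v2^2 + a12*v0*v1 + a13*v0*v2 + a23*v1*v2)
    - (2*a11*u0*v0 + 2*a22*u1*v1 + 2*a33*u2*v2 + a12*(u0*v1+u1*v0)
        + a13*(u0*v2+u2*v0) + a23*(u1*v2+u2*v1))^2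
    = qaP a11 a12 a13 a22 a23 a33 (u1*v2 - u2*v1) (u2*v0 - u0*v2) (u0*v1 - u1*v0) := by
  simp only [qaP]; ring

lemma qaP_scale (a11 a12 a13 a22 a23 a33 g c0 c1 c2 : ℤ) :
    qaP a11 a12 a13 a22 a23 a33 (g*c0) (g*c1) (g*c2)
      = g^2 * qaP a11 a12 a13 a22 a23 a33 c0 c1 c2 := by
  simp only [qaP]; ring

lemma qaP_cast (a11 a12 a13 a22 a23 a33 : ℤ) (v : Fin 3 → ℤ) :
    ((qaP a11 a12 a13 a22 a23 a33 (v 0) (v 1) (v 2) : ℤ) : ℝ)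
      = (fun i => ((v i : ℤ) : ℝ)) ⬝ᵥ
          (Matrix.adjugate !![2*(a11:ℝ), a12, a13; a12, 2*a22, a23; a13, a23, 2*a33]) *ᵥ
        (fun i => ((v i : ℤ) : ℝ)) := by
  rw [Matrix.adjugate_fin_three]
  simp [dotProduct, Matrix.mulVec, Fin.sum_univ_three, qaP]
  ring

open Matrix

lemma primitive_part (w : Fin 3 → ℤ) (hw : w ≠ 0) :
    ∃ (g : ℕ) (p r s : ℤ), 0 < g ∧ w 0 = g * p ∧ w 1 = g * r ∧ w 2 = g * s ∧
      Int.gcd (↑(Int.gcd p r)) s = 1 := by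
  set h : ℕ := Int.gcd (w 0) (w 1) with hh
  set g : ℕ := Int.gcd (↑h) (w 2) with hg
  have hcomp : ¬ (w 0 = 0 ∧ w 1 = 0 ∧ w 2 = (0:ℤ)) := by
    rintro ⟨h0, h1, h2⟩
    apply hw
    funext i
    fin_cases i <;> assumption
  have hgpos : 0 < g := by
    rw [hg, Int.gcd_pos_iff]
    by_cases h2 : w 2 = 0
    · left
      simp only [ne_eq, Int.natCast_eq_zero, hh]
      rw [Int.gcd_eq_zero_iff]
      tauto
    · right; exact h2
  have hdvd0' : (↑g : ℤ) ∣ (↑h : ℤ) := Int.gcd_dvd_left _ _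
  have hdvd1 : (↑g : ℤ) ∣ w 1 := dvd_trans hdvd0' (hh ▸ Int.gcd_dvd_right _ _)
  have hdvd0'' : (↑g : ℤ) ∣ w 0 := dvd_trans hdvd0' (hh ▸ Int.gcd_dvd_left _ _)
  have hdvd2 : (↑g : ℤ) ∣ w 2 := Int.gcd_dvd_right _ _
  refine ⟨g, w 0 / g, w 1 / g, w 2 / g, hgpos, (Int.mul_ediv_cancel' hdvd0'').symm,
    (Int.mul_ediv_cancel' hdvd1).symm, (Int.mul_ediv_cancel' hdvd2).symm, ?_⟩
  have h01 : Int.gcd (w 0 / g) (w 1 / g) = h / g := by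
    rw [hh, Int.gcd_div hdvd0'' hdvd1]
    simp
  rw [h01]
  have hcast : ((h / g : ℕ) : ℤ) = (↑h : ℤ) / (↑g : ℤ) := by
    obtain ⟨m, hm⟩ : g ∣ h := Int.natCast_dvd_natCast.mp hdvd0'
    rw [hm, Nat.mul_div_cancel_left _ hgpos]
    push_cast
    rw [Int.mul_ediv_cancel_left _ (by exact_mod_cast hgpos.ne')]
  rw [hcast]
  exact Int.gcd_div_gcd_div_gcd (by exact_mod_cast hgpos)

lemma basis_construct (p r s : ℤ) (hprim : Int.gcd (↑(Int.gcd p r)) s = 1) :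
    ∃ u₁ u₂ u₃ : Fin 3 → ℤ,
      IsUnit (Matrix.det (Matrix.of fun i j => ![u₁, u₂, u₃] j i)) ∧
      ∀ a11 a12 a13 a22 a23 a33 : ℤ,
        qaP a11 a12 a13 a22 a23 a33 (u₁ 1 * u₂ 2 - u₁ 2 * u₂ 1)
          (u₁ 2 * u₂ 0 - u₁ 0 * u₂ 2) (u₁ 0 * u₂ 1 - u₁ 1 * u₂ 0)
        = qaP a11 a12 a13 a22 a23 a33 p r s := by
  by_cases hG2 : Int.gcd p r = 0
  · obtain ⟨hp0, hr0⟩ := Int.gcd_eq_zero_iff.mp hG2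
    have hs1 : s.natAbs = 1 := by
      rw [hG2] at hprim
      simpa using hprim
    have hs2 : s ^ 2 = 1 := by
      rcases Int.natAbs_eq_iff.mp hs1 with h | h <;> rw [h] <;> norm_num
    refine ⟨![1,0,0], ![0,1,0], ![0,0,1], ?_, ?_⟩
    · have : Matrix.det (Matrix.of fun i j =>
          (![![1,0,0], ![0,1,0], ![0,0,1]] : Fin 3 → Fin 3 → ℤ) j i) = 1 := by
        rw [Matrix.det_fin_three]
        simp
      rw [this]
      exact isUnit_one
    · intro a11 a12 a13 a22 a23 a33
      simp only [Matrix.cons_val_zero, Matrix.cons_val_one, Matrix.head_cons,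
        Matrix.cons_val_two, Matrix.tail_cons, qaP, hp0, hr0]
      linear_combination (a12^2 - 4*a11*a22) * hs2
  · -- nondegenerate case
    set G2 : ℤ := (↑(Int.gcd p r) : ℤ) with hG2def
    have hG2ne : G2 ≠ 0 := by
      simpa [hG2def] using hG2
    have hdp : G2 ∣ p := Int.gcd_dvd_left _ _
    have hdr : G2 ∣ r := Int.gcd_dvd_right _ _
    set p' : ℤ := p / G2 with hp'
    set r' : ℤ := r / G2 with hr'
    have hp : p = G2 * p' := (Int.mul_ediv_cancel' hdp).symm
    have hr : r = G2 * r' := (Int.mul_ediv_cancel' hdr).symm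
    set X : ℤ := Int.gcdA p r with hX
    set Y : ℤ := Int.gcdB p r with hY
    have hbez : G2 = p * X + r * Y := Int.gcd_eq_gcd_ab p r
    have hXY : p' * X + r' * Y = 1 := by
      have h2 : G2 * (p' * X + r' * Y) = G2 * 1 := by
        rw [mul_one]
        calc G2 * (p' * X + r' * Y) = p * X + r * Y := by rw [hp, hr]; ring
          _ = G2 := hbez.symm
      exact mul_left_cancel₀ hG2ne h2
    set U : ℤ := Int.gcdA G2 s with hU
    set V : ℤ := Int.gcdB G2 s with hV
    have hUV : G2 * U + s * V = 1 := by
      have := Int.gcd_eq_gcd_ab G2 s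
      rw [hprim] at this
      exact_mod_cast this.symm
    refine ⟨![-r', p', 0], ![X*s, Y*s, -G2], ![X*U, Y*U, V], ?_, ?_⟩
    · have hdet : Matrix.det (Matrix.of fun i j =>
          (![![-r', p', 0], ![X*s, Y*s, -G2], ![X*U, Y*U, V]] : Fin 3 → Fin 3 → ℤ) j i)
          = -1 := by
        rw [Matrix.det_fin_three]
        simp only [Matrix.of_apply, Matrix.cons_val_zero, Matrix.cons_val_one,
          Matrix.head_cons, Matrix.cons_val_two, Matrix.tail_cons]
        linear_combination (-(G2*U + s*V)) * hXY - hUV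
      rw [hdet]
      exact isUnit_one.neg
    · intro a11 a12 a13 a22 a23 a33
      simp only [Matrix.cons_val_zero, Matrix.cons_val_one, Matrix.head_cons,
        Matrix.cons_val_two, Matrix.tail_cons]
      have hc2 : (-r')*(Y*s) - p'*(X*s) = -s := by linear_combination (-s) * hXY
      have hc0 : p' * (-G2) - 0*(Y*s) = -p := by linear_combination hp
      have hc1 : 0*(X*s) - (-r')*(-G2) = -r := by linear_combination hr
      rw [hc2, hc0, hc1]
      simp only [qaP]
      ring



/-- (Hermite–Rankin) Let `Q` be a positive definite integral ternary quadratic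
form with Hessian determinant `q`.  Then there is a `ℤ`-basis `(u₁,u₂,u₃)` of
`ℤ³` such that the restricted integral binary form `R(x,y) = Q(x·u₁ + y·u₂)`
has discriminant `Δ_R` with `0 < −Δ_R ≤ (2q)^{2/3}`. -/
theorem stmt_10 (a11 a12 a13 a22 a23 a33 : ℤ)
    (Q : (Fin 3 → ℤ) → ℤ)
    (hQ : ∀ v : Fin 3 → ℤ, Q v =
      a11 * v 0 ^ 2 + a22 * v 1 ^ 2 + a33 * v 2 ^ 2 +
      a12 * v 0 * v 1 + a13 * v 0 * v 2 + a23 * v 1 * v 2)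
    (hpos : ∀ v : Fin 3 → ℝ, v ≠ 0 →
      0 < (a11 : ℝ) * v 0 ^ 2 + (a22 : ℝ) * v 1 ^ 2 + (a33 : ℝ) * v 2 ^ 2 +
        (a12 : ℝ) * v 0 * v 1 + (a13 : ℝ) * v 0 * v 2 + (a23 : ℝ) * v 1 * v 2)
    (q : ℤ)
    (hq : q = Matrix.det
      !![2 * a11, a12, a13; a12, 2 * a22, a23; a13, a23, 2 * a33]) :
    ∃ (u₁ u₂ u₃ : Fin 3 → ℤ) (RA RB RC : ℤ),
      IsUnit (Matrix.det (Matrix.of fun i j => ![u₁, u₂, u₃] j i)) ∧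
      (∀ x y : ℤ, Q (x • u₁ + y • u₂) = RA * x ^ 2 + RB * x * y + RC * y ^ 2) ∧
      0 < -(RB ^ 2 - 4 * RA * RC) ∧
      ((-(RB ^ 2 - 4 * RA * RC) : ℤ) : ℝ) ≤ (2 * (q : ℝ)) ^ ((2 : ℝ) / 3) := by
  classical
  set Ar : Matrix (Fin 3) (Fin 3) ℝ :=
    !![2*(a11:ℝ), a12, a13; a12, 2*a22, a23; a13, a23, 2*a33] with hAr
  have hApos : Ar.PosDef := by
    refine Matrix.PosDef.of_dotProduct_mulVec_pos ?_ ?_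
    · ext i j
      fin_cases i <;> fin_cases j <;> simp [Matrix.conjTranspose_apply, hAr]
    · intro x hx
      have h := hpos x hx
      have hst : star x = x := by funext i; simp
      rw [hst]
      have hkey : x ⬝ᵥ Ar *ᵥ x
          = 2 * ((a11 : ℝ) * x 0 ^ 2 + (a22 : ℝ) * x 1 ^ 2 + (a33 : ℝ) * x 2 ^ 2 +
          (a12 : ℝ) * x 0 * x 1 + (a13 : ℝ) * x 0 * x 2 + (a23 : ℝ) * x 1 * x 2) := by
        simp [hAr, dotProduct, Matrix.mulVec, Fin.sum_univ_three]
        ring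
      rw [hkey]
      linarith
  have hdetAr : (q : ℝ) = Ar.det := by
    rw [hq, hAr]
    rw [Matrix.det_fin_three, Matrix.det_fin_three]
    push_cast
    simp
  have hqposR : (0:ℝ) < (q:ℝ) := by rw [hdetAr]; exact hApos.det_pos
  have hqpos : 0 < q := by exact_mod_cast hqposR
  -- adjugate matrix
  set Mr : Matrix (Fin 3) (Fin 3) ℝ := Ar.adjugate with hMrdef
  have hMr : Mr.PosDef := by
    have hMeq : Mr = Ar.det • Ar⁻¹ := by
      rw [hMrdef, Matrix.inv_def, smul_smul, Ring.inverse_eq_inv,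
        mul_inv_cancel₀ (by rw [← hdetAr]; exact hqposR.ne'), one_smul]
    have hinv : Ar⁻¹.PosDef := hApos.inv
    refine Matrix.PosDef.of_dotProduct_mulVec_pos ?_ ?_
    · show Mrᴴ = Mr
      rw [hMeq, Matrix.conjTranspose_smul, hinv.1.eq]
      simp
    · intro x hx
      rw [hMeq]
      have hsm : star x ⬝ᵥ (Ar.det • Ar⁻¹) *ᵥ x = Ar.det * (star x ⬝ᵥ Ar⁻¹ *ᵥ x) := by
        rw [Matrix.smul_mulVec, dotProduct_smul, smul_eq_mul]
      rw [hsm]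
      exact mul_pos hApos.det_pos (hinv.dotProduct_mulVec_pos hx)
  have hMdet : Mr.det = (q:ℝ) ^ 2 := by
    rw [hMrdef, Matrix.det_adjugate, ← hdetAr]
    norm_num
  -- quadratic form positivity transfer
  have hqa_cast : ∀ v : Fin 3 → ℤ,
      ((qaP a11 a12 a13 a22 a23 a33 (v 0) (v 1) (v 2) : ℤ) : ℝ)
        = (fun i => ((v i : ℤ) : ℝ)) ⬝ᵥ Mr *ᵥ (fun i => ((v i : ℤ) : ℝ)) := by
    intro v
    rw [hMrdef, hAr]
    exact qaP_cast a11 a12 a13 a22 a23 a33 v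
  have hqa_pos : ∀ v : Fin 3 → ℤ, v ≠ 0 →
      0 < qaP a11 a12 a13 a22 a23 a33 (v 0) (v 1) (v 2) := by
    intro v hv
    have hcv : (fun i => ((v i : ℤ):ℝ)) ≠ 0 := by
      intro hcon
      apply hv
      funext i
      have := congrFun hcon i
      simpa using this
    have h2 := hMr.dotProduct_mulVec_pos hcv
    have hst : star (fun i => ((v i : ℤ):ℝ)) = fun i => ((v i:ℤ):ℝ) := by
      funext i; simp
    rw [hst, ← hqa_cast v] at h2
    exact_mod_cast h2
  -- Minkowski
  have h2q : (0:ℝ) < 2 * (q:ℝ) := by linarith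
  set R : ℝ := (2 * (q:ℝ)) ^ ((1:ℝ)/3) with hRdef
  have hRpos : 0 < R := Real.rpow_pos_of_pos h2q _
  have hR3 : R ^ (3:ℕ) = 2 * (q:ℝ) := by
    rw [hRdef, ← Real.rpow_natCast ((2 * (q:ℝ)) ^ ((1:ℝ)/3)) 3, ← Real.rpow_mul h2q.le]
    norm_num
  have hR2 : R ^ (2:ℕ) = (2 * (q:ℝ)) ^ ((2:ℝ)/3) := by
    rw [hRdef, ← Real.rpow_natCast ((2 * (q:ℝ)) ^ ((1:ℝ)/3)) 2, ← Real.rpow_mul h2q.le]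
    norm_num
  have hvol : 8 * (q:ℝ) < 4 / 3 * Real.pi * R ^ 3 := by
    rw [hR3]
    nlinarith [Real.pi_gt_three, hqposR]
  obtain ⟨w, hw0, hwle⟩ := mink Mr hMr (q:ℝ) R hqposR hMdet hRpos hvol
  have hwle' : ((qaP a11 a12 a13 a22 a23 a33 (w 0) (w 1) (w 2) : ℤ) : ℝ)
      ≤ (2 * (q:ℝ)) ^ ((2:ℝ)/3) := by
    rw [hqa_cast w, ← hR2]
    exact hwle
  -- primitivize
  obtain ⟨g, p, r, s, hgpos, hw0eq, hw1eq, hw2eq, hprim⟩ := primitive_part w hw0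
  set N' : ℤ := qaP a11 a12 a13 a22 a23 a33 p r s with hN'def
  have hscale : qaP a11 a12 a13 a22 a23 a33 (w 0) (w 1) (w 2) = (g:ℤ)^2 * N' := by
    rw [hw0eq, hw1eq, hw2eq, qaP_scale]
  have hvne : (![p, r, s] : Fin 3 → ℤ) ≠ 0 := by
    intro hcon
    apply hw0
    funext i
    have h0 : p = 0 := by have := congrFun hcon 0; simpa using this
    have h1 : r = 0 := by have := congrFun hcon 1; simpa using this
    have h2 : s = 0 := by have := congrFun hcon 2; simpa using this
    fin_cases i <;> simp [hw0eq, hw1eq, hw2eq, h0, h1, h2]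
  have hN'pos : 0 < N' := by
    have := hqa_pos ![p, r, s] hvne
    simpa [hN'def] using this
  have hN'le : (N' : ℝ) ≤ (2 * (q:ℝ)) ^ ((2:ℝ)/3) := by
    refine le_trans ?_ hwle'
    have hgge : (1:ℤ) ≤ (g:ℤ) := by exact_mod_cast hgpos
    have : N' ≤ qaP a11 a12 a13 a22 a23 a33 (w 0) (w 1) (w 2) := by
      rw [hscale]
      have h1g : (1:ℤ) ≤ (g:ℤ)^2 := by nlinarith
      exact le_mul_of_one_le_left hN'pos.le h1g
    exact_mod_cast this
  -- construct the basis
  obtain ⟨u₁, u₂, u₃, hdetU, hcross⟩ := basis_construct p r s hprim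
  refine ⟨u₁, u₂, u₃, Q u₁, Q (u₁ + u₂) - Q u₁ - Q u₂, Q u₂, hdetU, ?_, ?_, ?_⟩
  · intro x y
    rw [hQ (x • u₁ + y • u₂), hQ u₁, hQ u₂, hQ (u₁ + u₂)]
    simp only [Pi.add_apply, Pi.smul_apply, smul_eq_mul]
    ring
  · have hkey : -((Q (u₁ + u₂) - Q u₁ - Q u₂) ^ 2 - 4 * Q u₁ * Q u₂) = N' := by
      rw [hQ (u₁ + u₂), hQ u₁, hQ u₂]
      simp only [Pi.add_apply]
      linear_combination adj_cross a11 a12 a13 a22 a23 a33 (u₁ 0) (u₁ 1) (u₁ 2)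
        (u₂ 0) (u₂ 1) (u₂ 2) + hcross a11 a12 a13 a22 a23 a33
    rw [hkey]
    exact hN'pos
  · have hkey : -((Q (u₁ + u₂) - Q u₁ - Q u₂) ^ 2 - 4 * Q u₁ * Q u₂) = N' := by
      rw [hQ (u₁ + u₂), hQ u₁, hQ u₂]
      simp only [Pi.add_apply]
      linear_combination adj_cross a11 a12 a13 a22 a23 a33 (u₁ 0) (u₁ 1) (u₁ 2)
        (u₂ 0) (u₂ 1) (u₂ 2) + hcross a11 a12 a13 a22 a23 a33
    rw [hkey]
    exact hN'le
end
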